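/- arXiv:1007.4679 — 2 statements merged into one kernel-verified Lean document; each statement's English description precedes it below -/
import Mathlib

section
/- Let a ∈ B(H) be positive and suppose a ≥ λ p for a projection p and a scalar λ > 0. Then the spectral projection χ_a(0, λ) satisfies χ_a(0, λ) ∧ p = 0; consequently χ_a(0,λ) is Murray–von Neumann subequivalent to R_a − p, and p is subequivalent to χ_a[λ, ∞). -/
set_option synthInstance.maxHeartbeats 1000000
set_option maxHeartbeats 4000000
set_option linter.unusedSectionVars false
set_option linter.unusedVariables false


open scoped InnerProductSpace
open ContinuousLinearMap

variable {H : Type*} [NormedAddCommGroup H] [InnerProductSpace ℂ H] [CompleteSpace H]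

/-- An (orthogonal) projection in `B(H)`: a self-adjoint idempotent. -/
def IsProjOp (p : H →L[ℂ] H) : Prop := IsSelfAdjoint p ∧ p * p = p

/-- The range (support) projection of an operator: the orthogonal projection onto the
closure of its range. -/
noncomputable def rangeProjection (b : H →L[ℂ] H) : H →L[ℂ] H :=
  ((LinearMap.range (b : H →ₗ[ℂ] H)).topologicalClosure).subtypeL ∘L
    (Submodule.orthogonalProjectionOnto (LinearMap.range (b : H →ₗ[ℂ] H)).topologicalClosure)

/-- Murray–von Neumann subequivalence of projections. -/
def MvNSubequiv (p q : H →L[ℂ] H) : Prop :=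
  ∃ v : H →L[ℂ] H, ContinuousLinearMap.adjoint v * v = p ∧ v * ContinuousLinearMap.adjoint v ≤ q

/-- Murray–von Neumann equivalence of projections. -/
def MvNEquiv (p q : H →L[ℂ] H) : Prop :=
  ∃ v : H →L[ℂ] H, ContinuousLinearMap.adjoint v * v = p ∧ v * ContinuousLinearMap.adjoint v = q

/-- The trace of a (positive) operator computed along a Hilbert basis. -/
noncomputable def traceAlong {ι : Type*} (b : HilbertBasis ι ℂ H) (a : H →L[ℂ] H) : ℝ :=
  ∑' i, RCLike.re ⟪b i, a (b i)⟫_ℂ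
lemma IsProjOp.apply_apply {q : H →L[ℂ] H} (hq : IsProjOp q) (x : H) : q (q x) = q x := by
  rw [← ContinuousLinearMap.mul_apply, hq.2]

lemma IsProjOp.inner_apply {q : H →L[ℂ] H} (hq : IsProjOp q) (x : H) :
    ⟪x, q x⟫_ℂ = ⟪q x, q x⟫_ℂ := by
  have h1 : ⟪x, q x⟫_ℂ = ⟪x, (ContinuousLinearMap.adjoint q) (q x)⟫_ℂ := by
    rw [hq.1.adjoint_eq, hq.apply_apply]
  rw [h1, ContinuousLinearMap.adjoint_inner_right]

lemma IsProjOp.reInner_eq {q : H →L[ℂ] H} (hq : IsProjOp q) (x : H) :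
    RCLike.re ⟪x, q x⟫_ℂ = ‖q x‖ ^ 2 := by
  rw [hq.inner_apply, inner_self_eq_norm_sq]

lemma IsProjOp.isPositive {q : H →L[ℂ] H} (hq : IsProjOp q) : q.IsPositive := by
  refine ⟨hq.1.isSymmetric, fun x => ?_⟩
  rw [ContinuousLinearMap.reApplyInnerSelf_apply, inner_re_symm, hq.reInner_eq]
  positivity

lemma isProjOp_sub {r q : H →L[ℂ] H} (hr : IsProjOp r) (hq : IsProjOp q)
    (hrq : r * q = q) : IsProjOp (r - q) := by
  have hqr : q * r = q := by
    have h := congrArg star hrq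
    rwa [star_mul, hr.1.star_eq, hq.1.star_eq] at h
  refine ⟨hr.1.sub hq.1, ?_⟩
  rw [sub_mul, mul_sub, mul_sub, hr.2, hq.2, hrq, hqr]
  abel

lemma projOp_le {s r : H →L[ℂ] H} (hs : IsProjOp s) (hr : IsProjOp r)
    (hrs : r * s = s) : s ≤ r := by
  rw [ContinuousLinearMap.le_def]
  exact (isProjOp_sub hr hs hrs).isPositive

lemma orthProj_comp_eq {q : H →L[ℂ] H} (hq : IsProjOp q) (K : Submodule ℂ H)
    [K.HasOrthogonalProjection] (hK : ∀ y : H, y ∈ K ↔ q y = y) :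
    K.subtypeL ∘L Submodule.orthogonalProjectionOnto K = q := by
  ext x
  show (Submodule.orthogonalProjectionOnto K x : H) = q x
  refine K.eq_starProjection_of_mem_orthogonal ((hK (q x)).2 (hq.apply_apply x)) ?_
  rw [Submodule.mem_orthogonal]
  intro u hu
  rw [inner_sub_right]
  have h : ⟪u, q x⟫_ℂ = ⟪u, x⟫_ℂ := by
    rw [← hq.1.adjoint_eq, ContinuousLinearMap.adjoint_inner_right, (hK u).1 hu]
  rw [h, sub_self]

lemma isProjOp_orthProj (K : Submodule ℂ H) [CompleteSpace K] :
    IsProjOp (K.subtypeL ∘L Submodule.orthogonalProjectionOnto K) := by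
  refine ⟨isSelfAdjoint_starProjection K, ?_⟩
  ext x
  show (Submodule.orthogonalProjectionOnto K ((Submodule.orthogonalProjectionOnto K x : H)) : H) = _
  rw [Submodule.orthogonalProjectionOnto_mem_subspace_eq_self]
  rfl

lemma exists_partial_isometry (b q : H →L[ℂ] H) (hq : IsProjOp q)
    (hqb : ∀ x : H, q (ContinuousLinearMap.adjoint b x) = ContinuousLinearMap.adjoint b x)
    (hker : ∀ x : H, q x = x → b x = 0 → x = 0) :
    ∃ v : H →L[ℂ] H, ContinuousLinearMap.adjoint v * v = q ∧
      IsProjOp (v * ContinuousLinearMap.adjoint v) ∧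
      ∀ y : H, (v * ContinuousLinearMap.adjoint v) y ∈ (LinearMap.range (b : H →ₗ[ℂ] H)).topologicalClosure := by
  set m : H →L[ℂ] H := CFC.sqrt (star b * b) with hm_def
  have hbb : (0 : H →L[ℂ] H) ≤ star b * b := star_mul_self_nonneg b
  have hm0 : (0 : H →L[ℂ] H) ≤ m := CFC.sqrt_nonneg _
  have hmsa : IsSelfAdjoint m := IsSelfAdjoint.of_nonneg hm0
  have hmm : m * m = star b * b := CFC.sqrt_mul_sqrt_self _ hbb
  have hinner : ∀ x : H, ⟪m x, m x⟫_ℂ = ⟪b x, b x⟫_ℂ := by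
    intro x
    calc ⟪m x, m x⟫_ℂ = ⟪x, (ContinuousLinearMap.adjoint m) (m x)⟫_ℂ :=
          (ContinuousLinearMap.adjoint_inner_right m x (m x)).symm
      _ = ⟪x, (star b * b) x⟫_ℂ := by
          rw [← ContinuousLinearMap.mul_apply, ← ContinuousLinearMap.star_eq_adjoint,
            hmsa.star_eq, hmm]
      _ = ⟪x, (ContinuousLinearMap.adjoint b) (b x)⟫_ℂ := by
          rw [ContinuousLinearMap.mul_apply, ContinuousLinearMap.star_eq_adjoint]
      _ = ⟪b x, b x⟫_ℂ := ContinuousLinearMap.adjoint_inner_right b x (b x)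
  have hnorm : ∀ x : H, ‖m x‖ = ‖b x‖ := by
    intro x
    have h1 := congrArg RCLike.re (hinner x)
    rw [inner_self_eq_norm_sq, inner_self_eq_norm_sq] at h1
    nlinarith [norm_nonneg (m x), norm_nonneg (b x)]
  have hmb0 : ∀ x : H, m x = 0 ↔ b x = 0 := by
    intro x
    rw [← norm_eq_zero (a := m x), ← norm_eq_zero (a := b x), hnorm]
  -- linear algebra: factor b through the range of m
  set mL : H →ₗ[ℂ] H := (m : H →ₗ[ℂ] H) with hmL
  set bL : H →ₗ[ℂ] H := (b : H →ₗ[ℂ] H) with hbL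
  have hkk : LinearMap.ker mL ≤ LinearMap.ker bL := by
    intro x hx
    rw [LinearMap.mem_ker] at hx ⊢
    exact (hmb0 x).1 hx
  set L0 : (H ⧸ LinearMap.ker mL) →ₗ[ℂ] H := (LinearMap.ker mL).liftQ bL hkk with hL0
  set eqv := mL.quotKerEquivRange with heqv
  set L1 : LinearMap.range mL →ₗ[ℂ] H :=
    L0.comp eqv.symm.toLinearMap with hL1def
  have hL1 : ∀ x : H, L1 ⟨m x, ⟨x, rfl⟩⟩ = b x := by
    intro x
    have h1 : eqv (Submodule.Quotient.mk x) = ⟨m x, ⟨x, rfl⟩⟩ :=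
      Subtype.ext (mL.quotKerEquivRange_apply_mk x)
    have h2 : (eqv.symm ⟨m x, ⟨x, rfl⟩⟩ : H ⧸ LinearMap.ker mL) = Submodule.Quotient.mk x := by
      rw [← h1, LinearEquiv.symm_apply_apply]
    show L0 (eqv.symm ⟨m x, ⟨x, rfl⟩⟩) = b x
    rw [h2]
    exact (LinearMap.ker mL).liftQ_apply bL x
  have hL1norm : ∀ z : LinearMap.range mL, ‖L1 z‖ = ‖(z : H)‖ := by
    rintro ⟨z, x, rfl⟩
    have h1 : L1 ⟨mL x, ⟨x, rfl⟩⟩ = b x := hL1 x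
    rw [h1]
    show ‖b x‖ = ‖m x‖
    exact (hnorm x).symm
  set L2 : (LinearMap.range mL) →L[ℂ] H :=
    L1.mkContinuous 1 (fun z => by rw [hL1norm z, one_mul]; exact le_rfl) with hL2
  have hL2app : ∀ z, L2 z = L1 z := fun z => rfl
  set S : Submodule ℂ H := (LinearMap.range mL).topologicalClosure with hS
  set jL : LinearMap.range mL →ₗ[ℂ] S :=
    Submodule.inclusion (LinearMap.range mL).le_topologicalClosure with hjL
  set J : LinearMap.range mL →L[ℂ] S :=
    jL.mkContinuous 1 (fun z => by rw [one_mul]; exact le_rfl) with hJ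
  have hJnorm : ∀ z, ‖J z‖ = ‖z‖ := fun z => rfl
  have hJiso : Isometry J := AddMonoidHomClass.isometry_of_norm J hJnorm
  have hJdense : DenseRange J := by
    intro z
    have himg : Subtype.val '' Set.range (J : LinearMap.range mL → S)
        = ((LinearMap.range mL : Submodule ℂ H) : Set H) := by
      ext w
      constructor
      · rintro ⟨z', ⟨u, rfl⟩, rfl⟩
        exact u.2
      · intro hw
        exact ⟨J ⟨w, hw⟩, ⟨⟨w, hw⟩, rfl⟩, rfl⟩
    rw [closure_subtype, himg]
    exact z.2
  set W : S →L[ℂ] H := L2.extend J with hW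
  have hWJ : ∀ z, W (J z) = L2 z := fun z =>
    ContinuousLinearMap.extend_eq (f := L2) (e := J) hJdense hJiso.isUniformInducing z
  have hWnorm : ∀ z : S, ‖W z‖ = ‖z‖ := by
    intro z
    refine hJdense.induction_on z ?_ ?_
    · exact isClosed_eq (continuous_norm.comp W.continuous) continuous_norm
    · intro z'
      rw [hWJ z', hJnorm, hL2app, hL1norm]
      rfl
  have hWmem : ∀ z : S, W z ∈ (LinearMap.range (b : H →ₗ[ℂ] H)).topologicalClosure := by
    intro z
    refine hJdense.induction_on z ?_ ?_
    · exact (Submodule.isClosed_topologicalClosure _).preimage W.continuous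
    · rintro ⟨z', x, rfl⟩
      rw [hWJ, hL2app]
      have h1 : L1 ⟨mL x, ⟨x, rfl⟩⟩ = b x := hL1 x
      rw [h1]
      exact (LinearMap.range (b : H →ₗ[ℂ] H)).le_topologicalClosure (LinearMap.mem_range_self (b : H →ₗ[ℂ] H) x)
  -- S consists exactly of the fixed points of q
  have hfixq_closed : IsClosed {y : H | q y = y} := isClosed_eq q.continuous continuous_id
  have h1 : ∀ z : H, z ∈ (LinearMap.range mL)ᗮ ↔ m z = 0 := by
    intro z
    rw [Submodule.mem_orthogonal]
    constructor
    · intro h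
      have h0 : ∀ u : H, ⟪u, m z⟫_ℂ = 0 := fun u =>
        (hmsa.isSymmetric u z).symm.trans (h (mL u) ⟨u, rfl⟩)
      exact inner_self_eq_zero.mp (h0 (m z))
    · rintro h u ⟨y, rfl⟩
      have hsym : ⟪mL y, z⟫_ℂ = ⟪y, mL z⟫_ℂ := hmsa.isSymmetric y z
      have hz0 : mL z = 0 := h
      rw [hsym, hz0, inner_zero_right]
  have h2 : ∀ z : H, z ∈ (LinearMap.range ((ContinuousLinearMap.adjoint b : H →L[ℂ] H) : H →ₗ[ℂ] H))ᗮ ↔ b z = 0 := by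
    intro z
    rw [Submodule.mem_orthogonal]
    constructor
    · intro h
      have h0 : ∀ u : H, ⟪u, b z⟫_ℂ = 0 := fun u => by
        rw [← ContinuousLinearMap.adjoint_inner_left]
        exact h _ (LinearMap.mem_range_self _ u)
      exact inner_self_eq_zero.mp (h0 (b z))
    · rintro h u ⟨y, rfl⟩
      show ⟪ContinuousLinearMap.adjoint b y, z⟫_ℂ = 0
      rw [ContinuousLinearMap.adjoint_inner_left, h, inner_zero_right]
  have hSS : S = (LinearMap.range ((ContinuousLinearMap.adjoint b : H →L[ℂ] H) : H →ₗ[ℂ] H)).topologicalClosure := by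
    rw [hS, ← Submodule.orthogonal_orthogonal_eq_closure,
      ← Submodule.orthogonal_orthogonal_eq_closure]
    congr 1
    ext z
    rw [h1 z, h2 z, hmb0 z]
  have hSsub : ∀ z : H, z ∈ S → q z = z := by
    intro z hz
    have hz' : z ∈ closure ((LinearMap.range ((ContinuousLinearMap.adjoint b : H →L[ℂ] H) : H →ₗ[ℂ] H) :
        Submodule ℂ H) : Set H) := by
      rw [hSS] at hz
      exact hz
    have hsubset : closure ((LinearMap.range ((ContinuousLinearMap.adjoint b : H →L[ℂ] H) : H →ₗ[ℂ] H) :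
        Submodule ℂ H) : Set H) ⊆ {y : H | q y = y} := by
      refine closure_minimal ?_ hfixq_closed
      rintro w ⟨y, rfl⟩
      exact hqb y
    exact hsubset hz'
  have hSfix : ∀ z : H, z ∈ S ↔ q z = z := by
    intro z
    refine ⟨hSsub z, fun hz => ?_⟩
    set w := z - (Submodule.orthogonalProjectionOnto S z : H) with hw
    have hw1 : w ∈ Sᗮ := S.sub_starProjection_mem_orthogonal z
    have hw2 : q w = w := by
      have hPz : q ((Submodule.orthogonalProjectionOnto S z : H)) = (Submodule.orthogonalProjectionOnto S z : H) :=
        hSsub _ (Submodule.orthogonalProjectionOnto S z).2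
      rw [hw, map_sub, hz, hPz]
    have hw3 : b w = 0 := by
      have hmem : ∀ y : H, ContinuousLinearMap.adjoint b y ∈ S := fun y => by
        rw [hSS]
        exact Submodule.le_topologicalClosure _ (LinearMap.mem_range_self _ y)
      have h0 : ∀ y : H, ⟪y, b w⟫_ℂ = 0 := fun y => by
        rw [← ContinuousLinearMap.adjoint_inner_left]
        exact (Submodule.mem_orthogonal _ _).1 hw1 _ (hmem y)
      exact inner_self_eq_zero.mp (h0 (b w))
    have h4 := hker w hw2 hw3
    have h5 : z = (Submodule.orthogonalProjectionOnto S z : H) := by rwa [hw, sub_eq_zero] at h4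
    rw [h5]
    exact (Submodule.orthogonalProjectionOnto S z).2
  have hq_eq : S.subtypeL ∘L Submodule.orthogonalProjectionOnto S = q := orthProj_comp_eq hq S hSfix
  set v : H →L[ℂ] H := W ∘L (Submodule.orthogonalProjectionOnto S : H →L[ℂ] S) with hv
  have hv_apply : ∀ x : H, v x = W (Submodule.orthogonalProjectionOnto S x) := fun _ => rfl
  have hWinner : ∀ z1 z2 : S, ⟪W z1, W z2⟫_ℂ = ⟪(z1 : H), (z2 : H)⟫_ℂ := by
    intro z1 z2
    set WI : S →ₗᵢ[ℂ] H := ⟨(W : S →ₗ[ℂ] H), fun z => hWnorm z⟩ with hWI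
    have h := WI.inner_map_map z1 z2
    rw [Submodule.coe_inner] at h
    exact h
  have hqx : ∀ x : H, q x = (Submodule.orthogonalProjectionOnto S x : H) := by
    intro x
    conv_lhs => rw [← hq_eq]
    rfl
  have hvv : ContinuousLinearMap.adjoint v * v = q := by
    ext x
    refine ext_inner_left ℂ (fun y => ?_)
    rw [ContinuousLinearMap.mul_apply, ContinuousLinearMap.adjoint_inner_right]
    rw [hv_apply, hv_apply, hWinner, hqx]
    calc ⟪((Submodule.orthogonalProjectionOnto S y : S) : H), ((Submodule.orthogonalProjectionOnto S x : S) : H)⟫_ℂ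
        = ⟪y, ((Submodule.orthogonalProjectionOnto S ((Submodule.orthogonalProjectionOnto S x : H)) : S) : H)⟫_ℂ :=
          S.inner_starProjection_left_eq_right y _
      _ = ⟪y, ((Submodule.orthogonalProjectionOnto S x : S) : H)⟫_ℂ := by
          rw [Submodule.orthogonalProjectionOnto_mem_subspace_eq_self]
  have hvq : v * q = v := by
    ext x
    rw [ContinuousLinearMap.mul_apply, hqx, hv_apply, hv_apply]
    congr 1
    exact Submodule.orthogonalProjectionOnto_mem_subspace_eq_self _
  have hidem : v * ContinuousLinearMap.adjoint v * (v * ContinuousLinearMap.adjoint v)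
      = v * ContinuousLinearMap.adjoint v := by
    have hassoc : v * ContinuousLinearMap.adjoint v * (v * ContinuousLinearMap.adjoint v)
        = v * (ContinuousLinearMap.adjoint v * v) * ContinuousLinearMap.adjoint v := by
      noncomm_ring
    rw [hassoc, hvv, hvq]
  have hsa : IsSelfAdjoint (v * ContinuousLinearMap.adjoint v) := by
    show star (v * ContinuousLinearMap.adjoint v) = v * ContinuousLinearMap.adjoint v
    rw [star_mul, ← ContinuousLinearMap.star_eq_adjoint, star_star]
  refine ⟨v, hvv, ⟨hsa, hidem⟩, fun y => ?_⟩
  rw [ContinuousLinearMap.mul_apply, hv_apply]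
  exact hWmem _


/-- If `a ≥ λ p` then `χ_a(0, λ) ∧ p = 0`, `χ_a(0,λ) ≼ R_a − p` and `p ≼ χ_a[λ, ∞)`.
Here `e` plays the role of `χ_a(0,λ)` and `f` that of `χ_a[λ,∞)`, characterized by:
`e + f = R_a`, `f` commutes with `a`, `a ≥ λ` on the range of `f`, and `a < λ`
strictly on the range of `e`. -/
theorem stmt4 (a : H →L[ℂ] H) (ha : a.IsPositive) (lam : ℝ) (hlam : 0 < lam)
    (p : H →L[ℂ] H) (hp : IsProjOp p) (hap : (lam : ℂ) • p ≤ a)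
    (e f : H →L[ℂ] H) (he : IsProjOp e) (hf : IsProjOp f)
    (hef : e + f = rangeProjection a)
    (hcf : a * f = f * a)
    (hflam : (lam : ℂ) • f ≤ a * f)
    (hestrict : ∀ x : H, e x = x → x ≠ 0 → RCLike.re ⟪x, a x⟫_ℂ < lam * ‖x‖ ^ 2) :
    (∀ x : H, e x = x → p x = x → x = 0) ∧
      MvNSubequiv e (rangeProjection a - p) ∧ MvNSubequiv p f := by
  have hap' : (a - (lam : ℂ) • p).IsPositive := (ContinuousLinearMap.le_def _ _).1 hap
  have h_ap : ∀ x : H, lam * RCLike.re ⟪x, p x⟫_ℂ ≤ RCLike.re ⟪x, a x⟫_ℂ := by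
    intro x
    have h0 := hap'.2 x
    rw [ContinuousLinearMap.reApplyInnerSelf_apply, ContinuousLinearMap.sub_apply,
      ContinuousLinearMap.smul_apply, inner_sub_left, inner_smul_left, map_sub] at h0
    have hconj : (starRingEnd ℂ) ((lam : ℝ) : ℂ) = ((lam : ℝ) : ℂ) := by
      simp [Complex.conj_ofReal]
    have hremul : RCLike.re (((lam : ℝ) : ℂ) * ⟪p x, x⟫_ℂ) = lam * RCLike.re ⟪p x, x⟫_ℂ := by
      simp
    rw [hconj, hremul] at h0
    have h1 : RCLike.re ⟪a x, x⟫_ℂ = RCLike.re ⟪x, a x⟫_ℂ := inner_re_symm _ _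
    have h2 : RCLike.re ⟪p x, x⟫_ℂ = RCLike.re ⟪x, p x⟫_ℂ := inner_re_symm _ _
    rw [h1, h2] at h0
    linarith
  -- Part 1
  have part1 : ∀ x : H, e x = x → p x = x → x = 0 := by
    intro x hex hpx
    by_contra hx0
    have h1 := hestrict x hex hx0
    have h2 := h_ap x
    rw [hpx, inner_self_eq_norm_sq] at h2
    linarith
  set K : Submodule ℂ H := (LinearMap.range (a : H →ₗ[ℂ] H)).topologicalClosure with hK
  have hRaProj : IsProjOp (rangeProjection a) := isProjOp_orthProj K
  -- p maps into the closure of the range of a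
  have hpz : ∀ z : H, z ∈ (LinearMap.range (a : H →ₗ[ℂ] H))ᗮ → p z = 0 := by
    intro z hz
    have haz : a z = 0 := by
      have h0 : ∀ y : H, ⟪y, a z⟫_ℂ = 0 := fun y =>
        (ha.1 y z).symm.trans
          ((Submodule.mem_orthogonal _ _).1 hz _ (LinearMap.mem_range_self (a : H →ₗ[ℂ] H) y))
      exact inner_self_eq_zero.mp (h0 (a z))
    have h2 := h_ap z
    have h3 : RCLike.re ⟪z, a z⟫_ℂ = 0 := by rw [haz, inner_zero_right, map_zero]
    have h4 : RCLike.re ⟪z, p z⟫_ℂ = ‖p z‖ ^ 2 := hp.reInner_eq z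
    rw [h3, h4] at h2
    have h5 : ‖p z‖ ^ 2 = 0 := by nlinarith [sq_nonneg ‖p z‖]
    have h6 : ‖p z‖ = 0 := by
      exact pow_eq_zero_iff (two_ne_zero) |>.mp h5
    exact norm_eq_zero.mp h6
  have hpmem : ∀ x : H, p x ∈ K := by
    intro x
    rw [hK, ← Submodule.orthogonal_orthogonal_eq_closure, Submodule.mem_orthogonal]
    intro u hu
    have h1 : p u = 0 := hpz u hu
    have h2 : ⟪p u, x⟫_ℂ = ⟪u, p x⟫_ℂ := hp.1.isSymmetric u x
    rw [← h2, h1, inner_zero_left]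
  have hRap : rangeProjection a * p = p := by
    ext x
    show ((Submodule.orthogonalProjectionOnto K (p x) : K) : H) = p x
    exact Submodule.starProjection_eq_self_iff.mpr (hpmem x)
  -- f * e = 0
  have hRaIdem : (e + f) * (e + f) = e + f := by rw [hef]; exact hRaProj.2
  have hef2 : e * f + f * e = 0 := by
    have h2 : (e + f) * (e + f) = e * e + (e * f + f * e) + f * f := by noncomm_ring
    rw [h2, he.2, hf.2] at hRaIdem
    have h3 : e * f + f * e = e + (e * f + f * e) + f - (e + f) := by abel
    rw [hRaIdem] at h3
    simpa using h3
  have hefe : e * f * e = 0 := by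
    have h4 : e * (e * f + f * e) * e = e * e * f * e + e * f * (e * e) := by noncomm_ring
    rw [hef2, mul_zero, zero_mul, he.2] at h4
    have h5 : e * f * e + e * f * e = 0 := h4.symm
    have h6 : (2 : ℂ) • (e * f * e) = 0 := by rw [two_smul]; exact h5
    exact (smul_eq_zero.mp h6).resolve_left two_ne_zero
  have hfe : f * e = 0 := by
    ext x
    have h5 : ⟪f (e x), f (e x)⟫_ℂ = ⟪x, (e * f * e) x⟫_ℂ := by
      calc ⟪f (e x), f (e x)⟫_ℂ = ⟪e x, f (e x)⟫_ℂ := (hf.inner_apply (e x)).symm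
        _ = ⟪x, e (f (e x))⟫_ℂ := he.1.isSymmetric x (f (e x))
        _ = ⟪x, (e * f * e) x⟫_ℂ := by
            rw [ContinuousLinearMap.mul_apply, ContinuousLinearMap.mul_apply]
    rw [hefe, ContinuousLinearMap.zero_apply, inner_zero_right] at h5
    show f (e x) = (0 : H →L[ℂ] H) x
    rw [ContinuousLinearMap.zero_apply]
    exact inner_self_eq_zero.mp h5
  have hRaE : ∀ x : H, rangeProjection a (e x) = e x := by
    intro x
    rw [← hef, ContinuousLinearMap.add_apply, he.apply_apply]
    have h7 : f (e x) = 0 := by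
      rw [← ContinuousLinearMap.mul_apply, hfe, ContinuousLinearMap.zero_apply]
    rw [h7, add_zero]
  -- Part 2
  set b2 : H →L[ℂ] H := (1 - p) * e with hb2
  have hb2adj : ContinuousLinearMap.adjoint b2 = e * (1 - p) := by
    rw [← ContinuousLinearMap.star_eq_adjoint, hb2, star_mul, star_sub, star_one,
      he.1.star_eq, hp.1.star_eq]
  have hqb2 : ∀ x : H, e (ContinuousLinearMap.adjoint b2 x) = ContinuousLinearMap.adjoint b2 x := by
    intro x
    rw [hb2adj, ContinuousLinearMap.mul_apply, he.apply_apply]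
  have hker2 : ∀ x : H, e x = x → b2 x = 0 → x = 0 := by
    intro x hex hbx
    have h1 : (1 - p) x = 0 := by
      have h2 : b2 x = (1 - p) (e x) := ContinuousLinearMap.mul_apply _ _ _
      rw [hex] at h2
      rw [← h2, hbx]
    have hpx : p x = x := by
      rw [ContinuousLinearMap.sub_apply, ContinuousLinearMap.one_apply] at h1
      exact (sub_eq_zero.mp h1).symm
    exact part1 x hex hpx
  obtain ⟨v2, hv2a, hv2b, hv2c⟩ := exists_partial_isometry b2 e he hqb2 hker2
  have hRaSub : IsProjOp (rangeProjection a - p) := isProjOp_sub hRaProj hp hRap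
  have hfix2 : ∀ x : H, (rangeProjection a - p) (b2 x) = b2 x := by
    intro x
    have hb2x : b2 x = e x - p (e x) := by
      rw [hb2, ContinuousLinearMap.mul_apply, ContinuousLinearMap.sub_apply,
        ContinuousLinearMap.one_apply]
    rw [ContinuousLinearMap.sub_apply]
    have hra : rangeProjection a (b2 x) = b2 x := by
      rw [hb2x, map_sub, hRaE]
      have h9 : rangeProjection a (p (e x)) = p (e x) := by
        show ((Submodule.orthogonalProjectionOnto K (p (e x)) : K) : H) = p (e x)
        exact Submodule.starProjection_eq_self_iff.mpr (hpmem (e x))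
      rw [h9]
    have hpb : p (b2 x) = 0 := by
      rw [hb2x, map_sub, hp.apply_apply, sub_self]
    rw [hra, hpb, sub_zero]
  have hfixcl2 : (rangeProjection a - p) * (v2 * ContinuousLinearMap.adjoint v2)
      = v2 * ContinuousLinearMap.adjoint v2 := by
    ext y
    rw [ContinuousLinearMap.mul_apply]
    have hmem := hv2c y
    have hsubset : ((LinearMap.range (b2 : H →ₗ[ℂ] H)).topologicalClosure : Set H)
        ⊆ {w : H | (rangeProjection a - p) w = w} := by
      rw [Submodule.topologicalClosure_coe]
      refine closure_minimal ?_ (isClosed_eq (rangeProjection a - p).continuous continuous_id)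
      rintro w ⟨x, rfl⟩
      exact hfix2 x
    exact hsubset hmem
  have hle2 : v2 * ContinuousLinearMap.adjoint v2 ≤ rangeProjection a - p :=
    projOp_le hv2b hRaSub hfixcl2
  -- Part 3
  set b3 : H →L[ℂ] H := f * p with hb3
  have hb3adj : ContinuousLinearMap.adjoint b3 = p * f := by
    rw [← ContinuousLinearMap.star_eq_adjoint, hb3, star_mul, hf.1.star_eq, hp.1.star_eq]
  have hqb3 : ∀ x : H, p (ContinuousLinearMap.adjoint b3 x) = ContinuousLinearMap.adjoint b3 x := by
    intro x
    rw [hb3adj, ContinuousLinearMap.mul_apply, hp.apply_apply]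
  have hker3 : ∀ x : H, p x = x → b3 x = 0 → x = 0 := by
    intro x hpx hbx
    have hfx : f x = 0 := by
      have h2 : b3 x = f (p x) := ContinuousLinearMap.mul_apply _ _ _
      rw [hpx] at h2
      rw [← h2, hbx]
    have hxK : x ∈ K := by rw [← hpx]; exact hpmem x
    have hRax : rangeProjection a x = x := by
      show ((Submodule.orthogonalProjectionOnto K x : K) : H) = x
      exact Submodule.starProjection_eq_self_iff.mpr hxK
    have hex : e x = x := by
      have h3 : e x + f x = x := by
        rw [← ContinuousLinearMap.add_apply, hef, hRax]
      rwa [hfx, add_zero] at h3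
    exact part1 x hex hpx
  obtain ⟨v3, hv3a, hv3b, hv3c⟩ := exists_partial_isometry b3 p hp hqb3 hker3
  have hfixcl3 : f * (v3 * ContinuousLinearMap.adjoint v3)
      = v3 * ContinuousLinearMap.adjoint v3 := by
    ext y
    rw [ContinuousLinearMap.mul_apply]
    have hmem := hv3c y
    have hsubset : ((LinearMap.range (b3 : H →ₗ[ℂ] H)).topologicalClosure : Set H)
        ⊆ {w : H | f w = w} := by
      rw [Submodule.topologicalClosure_coe]
      refine closure_minimal ?_ (isClosed_eq f.continuous continuous_id)
      rintro w ⟨x, rfl⟩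
      show f (b3 x) = b3 x
      rw [hb3, ContinuousLinearMap.mul_apply, hf.apply_apply]
    exact hsubset hmem
  have hle3 : v3 * ContinuousLinearMap.adjoint v3 ≤ f := projOp_le hv3b hf hfixcl3
  exact ⟨part1, ⟨v2, hv2a, hle2⟩, ⟨v3, hv3a, hle3⟩⟩
end

section
/- If k is a positive finite-rank operator on a Hilbert space with tr(k) a positive integer, then R_k + k is a finite sum of projections, and hence I + k is a finite sum of projections. -/
set_option linter.unusedSectionVars false
set_option linter.unusedVariables false
set_option linter.unnecessarySimpa false


open scoped InnerProductSpace
open ContinuousLinearMap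

variable {H : Type*} [NormedAddCommGroup H] [InnerProductSpace ℂ H] [CompleteSpace H]

noncomputable def rk1 (x : H) : H →L[ℂ] H := (innerSL ℂ x).smulRight x

lemma rk1_apply (x y : H) : rk1 x y = ⟪x, y⟫_ℂ • x := rfl

lemma rk1_symm (x : H) : IsSelfAdjoint (rk1 x : H →L[ℂ] H) := by
  rw [ContinuousLinearMap.isSelfAdjoint_iff_isSymmetric]
  intro u v
  simp [rk1_apply, inner_smul_left, inner_smul_right, mul_comm]

lemma isProjOp_rk1 {x : H} (hx : ‖x‖ = 1) : IsProjOp (rk1 x) := by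
  refine ⟨rk1_symm x, ?_⟩
  ext y
  simp only [ContinuousLinearMap.mul_apply, rk1_apply, inner_smul_right, smul_smul]
  rw [@inner_self_eq_norm_sq_to_K ℂ, hx]
  norm_num

def SOP (A : H →L[ℂ] H) : Prop :=
  ∃ (n : ℕ) (p : Fin n → H →L[ℂ] H), (∀ j, IsProjOp (p j)) ∧ A = ∑ j, p j

lemma SOP.zero : SOP (0 : H →L[ℂ] H) := ⟨0, ![], by simp, by simp⟩

lemma SOP.proj {p : H →L[ℂ] H} (hp : IsProjOp p) : SOP p :=
  ⟨1, ![p], by simpa using hp, by simp⟩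

lemma SOP.add {A B : H →L[ℂ] H} (hA : SOP A) (hB : SOP B) : SOP (A + B) := by
  obtain ⟨n, p, hp, hps⟩ := hA
  obtain ⟨k, q, hq, hqs⟩ := hB
  refine ⟨n + k, Fin.append p q, ?_, ?_⟩
  · intro j
    refine Fin.addCases (fun i => ?_) (fun i => ?_) j
    · simpa [Fin.append_left] using hp i
    · simpa [Fin.append_right] using hq i
  · rw [hps, hqs, Fin.sum_univ_add]
    congr 1
    · exact Finset.sum_congr rfl fun i _ => by simp [Fin.append_left]
    · exact Finset.sum_congr rfl fun i _ => by simp [Fin.append_right]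

lemma merge_identity (e₁ e₂ : H) (a b c s σ l₁ l₂ : ℝ)
    (h1 : a^2 + σ*c^2 = l₁) (h2 : b^2 + σ*s^2 = l₂) (h3 : a*b + σ*(c*s) = 0) :
    (l₁:ℂ) • rk1 e₁ + (l₂:ℂ) • rk1 e₂ =
      rk1 ((a:ℂ)•e₁ + (b:ℂ)•e₂) + (σ:ℂ) • rk1 ((c:ℂ)•e₁ + (s:ℂ)•e₂) := by
  have h1' : (a:ℂ)^2 + (σ:ℂ)*(c:ℂ)^2 = (l₁:ℂ) := by push_cast [← h1]; ring
  have h2' : (b:ℂ)^2 + (σ:ℂ)*(s:ℂ)^2 = (l₂:ℂ) := by push_cast [← h2]; ring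
  have h3' : (a:ℂ)*(b:ℂ) + (σ:ℂ)*((c:ℂ)*(s:ℂ)) = 0 := by exact_mod_cast h3
  ext y
  simp only [ContinuousLinearMap.add_apply, ContinuousLinearMap.smul_apply, rk1_apply,
    inner_add_left, inner_smul_left, Complex.conj_ofReal, smul_add, add_smul, smul_smul]
  match_scalars
  · linear_combination -((⟪e₁, y⟫_ℂ) * h1' + (⟪e₂, y⟫_ℂ) * h3')
  · linear_combination -((⟪e₁, y⟫_ℂ) * h3' + (⟪e₂, y⟫_ℂ) * h2')

lemma double_merge_identity (e₁ e₂ : H) (p q σ l₁ l₂ : ℝ)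
    (h1 : 2*q^2 + σ = l₁) (h2 : 2*p^2 = l₂) :
    (l₁:ℂ) • rk1 e₁ + (l₂:ℂ) • rk1 e₂ =
      rk1 ((q:ℂ)•e₁ + (p:ℂ)•e₂) + rk1 (((-q:ℝ):ℂ)•e₁ + (p:ℂ)•e₂) + (σ:ℂ) • rk1 e₁ := by
  have h1' : 2*(q:ℂ)^2 + (σ:ℂ) = (l₁:ℂ) := by push_cast [← h1]; ring
  have h2' : 2*(p:ℂ)^2 = (l₂:ℂ) := by push_cast [← h2]; ring
  ext y
  simp only [ContinuousLinearMap.add_apply, ContinuousLinearMap.smul_apply, rk1_apply,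
    inner_add_left, inner_smul_left, Complex.conj_ofReal, smul_add, add_smul, smul_smul,
    Complex.ofReal_neg, map_neg]
  match_scalars
  · linear_combination -((⟪e₁, y⟫_ℂ) * h1')
  · linear_combination -((⟪e₂, y⟫_ℂ) * h2')

lemma norm_combo {e₁ e₂ : H} (he₁ : ‖e₁‖ = 1) (he₂ : ‖e₂‖ = 1) (h12 : ⟪e₁, e₂⟫_ℂ = 0)
    {a b : ℝ} (hab : a^2 + b^2 = 1) : ‖(a:ℂ)•e₁ + (b:ℂ)•e₂‖ = 1 := by
  have h : ‖(a:ℂ)•e₁ + (b:ℂ)•e₂‖^2 = 1 := by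
    rw [@norm_add_sq ℂ, inner_smul_left, inner_smul_right, h12]
    simp only [map_mul, Complex.conj_ofReal, mul_zero, Complex.zero_re, add_zero,
      norm_smul, he₁, he₂, mul_one, Complex.norm_real, Real.norm_eq_abs, mul_pow]
    rw [← sq_abs a, ← sq_abs b] at hab
    simpa using hab
  nlinarith [norm_nonneg ((a:ℂ)•e₁ + (b:ℂ)•e₂)]

lemma inner_combo_zero {e₁ e₂ v : H} (h1 : ⟪e₁, v⟫_ℂ = 0) (h2 : ⟪e₂, v⟫_ℂ = 0)
    (a b : ℝ) : ⟪(a:ℂ)•e₁ + (b:ℂ)•e₂, v⟫_ℂ = 0 := by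
  rw [inner_add_left, inner_smul_left, inner_smul_left, h1, h2]; simp

lemma inner_combo_zero' {e₁ e₂ v : H} (h1 : ⟪v, e₁⟫_ℂ = 0) (h2 : ⟪v, e₂⟫_ℂ = 0)
    (a b : ℝ) : ⟪v, (a:ℂ)•e₁ + (b:ℂ)•e₂⟫_ℂ = 0 := by
  rw [inner_add_right, inner_smul_right, inner_smul_right, h1, h2]; simp

lemma sq_eq_neg {x y : ℝ} (hx : x ≤ 0) (hy : 0 ≤ y) (h : x^2 = y^2) : x + y = 0 := by
  nlinarith

lemma single_merge_coeffs {l₁ l₂ : ℝ} (h1 : 1 ≤ l₁) (h2 : 0 < l₂) (h3 : l₂ < 1) :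
    ∃ a b c s : ℝ, a^2 + b^2 = 1 ∧ c^2 + s^2 = 1 ∧
      a^2 + (l₁+l₂-1)*c^2 = l₁ ∧ b^2 + (l₁+l₂-1)*s^2 = l₂ ∧
      a*b + (l₁+l₂-1)*(c*s) = 0 := by
  set σ := l₁ + l₂ - 1 with hσdef
  have hσ : 0 < σ := by simp only [hσdef]; linarith
  have hD : 0 < l₁ - l₂ := by linarith
  set D := l₁ - l₂ with hDdef
  have n1 : 0 ≤ l₁*(1-l₂)/D := div_nonneg (by nlinarith) hD.le
  have n2 : 0 ≤ l₂*(l₁-1)/D := div_nonneg (by nlinarith) hD.le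
  have n3 : 0 ≤ l₁*(l₁-1)/(σ*D) := div_nonneg (by nlinarith) (by positivity)
  have n4 : 0 ≤ l₂*(1-l₂)/(σ*D) := div_nonneg (by nlinarith) (by positivity)
  refine ⟨Real.sqrt (l₁*(1-l₂)/D), -Real.sqrt (l₂*(l₁-1)/D),
    Real.sqrt (l₁*(l₁-1)/(σ*D)), Real.sqrt (l₂*(1-l₂)/(σ*D)), ?_, ?_, ?_, ?_, ?_⟩
  · rw [neg_sq, Real.sq_sqrt n1, Real.sq_sqrt n2]
    field_simp
    ring
  · rw [Real.sq_sqrt n3, Real.sq_sqrt n4]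
    rw [← add_div, div_eq_one_iff_eq (by positivity)]
    ring
  · rw [Real.sq_sqrt n1, Real.sq_sqrt n3]
    field_simp
    ring
  · rw [neg_sq, Real.sq_sqrt n2, Real.sq_sqrt n4]
    field_simp
    ring
  · apply sq_eq_neg
    · have := Real.sqrt_nonneg (l₁*(1-l₂)/D)
      have := Real.sqrt_nonneg (l₂*(l₁-1)/D)
      nlinarith
    · have := Real.sqrt_nonneg (l₁*(l₁-1)/(σ*D))
      have := Real.sqrt_nonneg (l₂*(1-l₂)/(σ*D))
      positivity
    · rw [mul_pow, mul_pow, mul_pow, neg_sq, Real.sq_sqrt n1, Real.sq_sqrt n2,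
        Real.sq_sqrt n3, Real.sq_sqrt n4]
      field_simp

lemma double_merge_coeffs {l₁ l₂ : ℝ} (h2 : 0 ≤ l₂) (h3 : l₂ ≤ 2) :
    ∃ p q : ℝ, p^2 + q^2 = 1 ∧ 2*q^2 + (l₁+l₂-2) = l₁ ∧ 2*p^2 = l₂ := by
  have m1 : (0:ℝ) ≤ l₂/2 := by linarith
  have m2 : (0:ℝ) ≤ (2-l₂)/2 := by linarith
  refine ⟨Real.sqrt (l₂/2), Real.sqrt ((2-l₂)/2), ?_, ?_, ?_⟩
  · rw [Real.sq_sqrt m1, Real.sq_sqrt m2]; ring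
  · rw [Real.sq_sqrt m2]; ring
  · rw [Real.sq_sqrt m1]; ring

lemma SOP_sum_proj {κ : Type*} (s : Finset κ) (f : κ → H →L[ℂ] H)
    (hf : ∀ i ∈ s, IsProjOp (f i)) : SOP (∑ i ∈ s, f i) := by
  classical
  induction s using Finset.induction_on with
  | empty => simpa using SOP.zero
  | insert a t hnot ih =>
    rw [Finset.sum_insert hnot]
    exact SOP.add (SOP.proj (hf a (Finset.mem_insert_self a t)))
      (ih fun i hi => hf i (Finset.mem_insert_of_mem hi))

lemma fillmore_main {κ : Type*} [DecidableEq κ] (v : κ → H) (n : ℕ) :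
    ∀ (s : Finset κ) (lam : κ → ℝ) (σ : ℝ) (w : H),
      (∀ i ∈ s, ‖v i‖ = 1) →
      (∀ i ∈ s, ∀ j ∈ s, i ≠ j → ⟪v i, v j⟫_ℂ = 0) →
      (∀ i ∈ s, 1 ≤ lam i) → 0 ≤ σ →
      (σ = 0 ∨ (‖w‖ = 1 ∧ ∀ i ∈ s, ⟪w, v i⟫_ℂ = 0)) →
      σ + ∑ i ∈ s, lam i = n →
      SOP ((σ:ℂ) • rk1 w + ∑ i ∈ s, (lam i : ℂ) • rk1 (v i)) := by
  induction n using Nat.strong_induction_on with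
  | _ n IH =>
  intro s lam σ w hnorm horth hlam hσ hw hsum
  have hsumnn : 0 ≤ ∑ i ∈ s, lam i :=
    Finset.sum_nonneg fun i hi => le_trans zero_le_one (hlam i hi)
  by_cases hσ1 : 1 ≤ σ
  · -- peel a projection off the w-slot
    obtain ⟨hwn, hwo⟩ := hw.resolve_left (by intro h; rw [h] at hσ1; linarith)
    have hn1 : 1 ≤ n := by
      have : (1:ℝ) ≤ n := by rw [← hsum]; linarith
      exact_mod_cast this
    have key : (σ:ℂ) • rk1 w + ∑ i ∈ s, (lam i : ℂ) • rk1 (v i) =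
        rk1 w + (((σ-1:ℝ):ℂ) • rk1 w + ∑ i ∈ s, (lam i : ℂ) • rk1 (v i)) := by
      have : (σ:ℂ) = 1 + ((σ-1:ℝ):ℂ) := by push_cast; ring
      rw [this, add_smul, one_smul, add_assoc]
    rw [key]
    refine SOP.add (SOP.proj (isProjOp_rk1 hwn)) ?_
    refine IH (n-1) (by omega) s lam (σ-1) w hnorm horth hlam (by linarith)
      (Or.inr ⟨hwn, hwo⟩) ?_
    push_cast [Nat.cast_sub hn1]
    linarith [hsum]
  · push_neg at hσ1
    by_cases hσ0 : σ = 0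
    · subst hσ0
      rw [Complex.ofReal_zero, zero_smul, zero_add] at *
      by_cases h2 : ∃ i ∈ s, 2 ≤ lam i
      · -- peel a projection from a big eigenvalue
        obtain ⟨i, hi, hbig⟩ := h2
        have herase : ∑ j ∈ s, lam j = lam i + ∑ j ∈ s.erase i, lam j :=
          (Finset.add_sum_erase s lam hi).symm
        have herasenn : 0 ≤ ∑ j ∈ s.erase i, lam j :=
          Finset.sum_nonneg fun j hj => le_trans zero_le_one (hlam j (Finset.mem_of_mem_erase hj))
        have hn1 : 1 ≤ n := by
          have : (1:ℝ) ≤ n := by rw [← hsum]; linarith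
          exact_mod_cast this
        have key : ∑ j ∈ s, (lam j : ℂ) • rk1 (v j) =
            rk1 (v i) + ∑ j ∈ s, ((Function.update lam i (lam i - 1) j : ℝ) : ℂ) • rk1 (v j) := by
          rw [← Finset.add_sum_erase s _ hi, ← Finset.add_sum_erase s
            (fun j => ((Function.update lam i (lam i - 1) j : ℝ) : ℂ) • rk1 (v j)) hi]
          rw [Function.update_self]
          have : ∀ j ∈ s.erase i, ((Function.update lam i (lam i - 1) j : ℝ) : ℂ) • rk1 (v j)
              = (lam j : ℂ) • rk1 (v j) := fun j hj => by
            rw [Function.update_of_ne (Finset.ne_of_mem_erase hj)]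
          rw [Finset.sum_congr rfl this]
          have hc : (lam i : ℂ) = 1 + ((lam i - 1 : ℝ) : ℂ) := by push_cast; ring
          rw [hc, add_smul, one_smul, add_assoc]
        rw [key]
        refine SOP.add (SOP.proj (isProjOp_rk1 (hnorm i hi))) ?_
        have := IH (n-1) (by omega) s (Function.update lam i (lam i - 1)) 0 w hnorm horth
          (fun j hj => by
            by_cases hji : j = i
            · subst hji; rw [Function.update_self]; linarith
            · rw [Function.update_of_ne hji]; exact hlam j hj)
          le_rfl (Or.inl rfl) (by
            rw [Finset.sum_update_of_mem hi, Finset.sdiff_singleton_eq_erase]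
            push_cast [Nat.cast_sub hn1]
            linarith)
        simpa using this
      · push_neg at h2
        by_cases hall : ∀ i ∈ s, lam i = 1
        · have : ∑ i ∈ s, (lam i : ℂ) • rk1 (v i) = ∑ i ∈ s, rk1 (v i) :=
            Finset.sum_congr rfl fun i hi => by rw [hall i hi]; simp
          rw [this]
          exact SOP_sum_proj s _ fun i hi => isProjOp_rk1 (hnorm i hi)
        · -- double merge of two eigenvalues in (1,2)
          push_neg at hall
          obtain ⟨i, hi, hne⟩ := hall
          have hi1 : 1 < lam i := lt_of_le_of_ne (hlam i hi) (Ne.symm hne)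
          have hi2 : lam i < 2 := h2 i hi
          have hj : ∃ j ∈ s, j ≠ i ∧ lam j ≠ 1 := by
            by_contra hcon
            push_neg at hcon
            have hcard : 1 ≤ s.card := Finset.card_pos.mpr ⟨i, hi⟩
            have hs' : ∑ j ∈ s, lam j = (s.card - 1 : ℕ) + lam i := by
              rw [← Finset.add_sum_erase s lam hi]
              have : ∑ j ∈ s.erase i, lam j = ∑ j ∈ s.erase i, 1 := by
                refine Finset.sum_congr rfl fun j hjj => ?_
                exact hcon j (Finset.mem_of_mem_erase hjj) (Finset.ne_of_mem_erase hjj)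
              rw [this, Finset.sum_const, Finset.card_erase_of_mem hi]
              simp
              ring
            rw [hs'] at hsum
            have h3 : ((s.card - 1 : ℕ) : ℝ) + 1 < (n:ℝ) := by linarith
            have h4 : (n:ℝ) < ((s.card - 1 : ℕ) : ℝ) + 2 := by linarith
            have h5 : s.card - 1 + 1 < n := by exact_mod_cast h3
            have h6 : n < s.card - 1 + 2 := by exact_mod_cast h4
            omega
          obtain ⟨j, hjs, hjne, hjne1⟩ := hj
          have hj1 : 1 < lam j := lt_of_le_of_ne (hlam j hjs) (Ne.symm hjne1)
          have hj2 : lam j < 2 := h2 j hjs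
          have hij : ⟪v i, v j⟫_ℂ = 0 := horth i hi j hjs (Ne.symm hjne)
          obtain ⟨p, q, hpq, hq2, hp2⟩ :=
            double_merge_coeffs (l₁ := lam i) (l₂ := lam j) (by linarith) (by linarith)
          have hjs' : j ∈ s.erase i := Finset.mem_erase.mpr ⟨hjne, hjs⟩
          have hmerge := double_merge_identity (v i) (v j) p q (lam i + lam j - 2)
            (lam i) (lam j) hq2 hp2
          have hn2 : 2 ≤ n := by
            have herasenn : 0 ≤ ∑ x ∈ (s.erase i).erase j, lam x :=
              Finset.sum_nonneg fun x hx => le_trans zero_le_one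
                (hlam x (Finset.mem_of_mem_erase (Finset.mem_of_mem_erase hx)))
            have hsplitr : ∑ x ∈ s, lam x
                = lam i + (lam j + ∑ x ∈ (s.erase i).erase j, lam x) := by
              rw [Finset.add_sum_erase _ lam hjs', Finset.add_sum_erase _ lam hi]
            have : (2:ℝ) ≤ n := by rw [← hsum, hsplitr]; linarith
            exact_mod_cast this
          have key : ∑ x ∈ s, (lam x : ℂ) • rk1 (v x) =
              (rk1 ((q:ℂ)•(v i) + (p:ℂ)•(v j)) + rk1 (((-q:ℝ):ℂ)•(v i) + (p:ℂ)•(v j))) +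
              (((lam i + lam j - 2 : ℝ):ℂ) • rk1 (v i) +
                ∑ x ∈ (s.erase i).erase j, (lam x : ℂ) • rk1 (v x)) := by
            rw [← Finset.add_sum_erase s _ hi, ← Finset.add_sum_erase (s.erase i) _ hjs',
              ← add_assoc, hmerge]
            abel
          rw [key]
          refine SOP.add (SOP.add ?_ ?_) ?_
          · exact SOP.proj (isProjOp_rk1 (norm_combo (hnorm i hi) (hnorm j hjs) hij
              (by linarith : q^2 + p^2 = 1)))
          · exact SOP.proj (isProjOp_rk1 (norm_combo (hnorm i hi) (hnorm j hjs) hij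
              (by rw [neg_sq]; linarith : (-q)^2 + p^2 = 1)))
          · refine IH (n-2) (by omega) ((s.erase i).erase j) lam (lam i + lam j - 2) (v i)
              (fun x hx => hnorm x (Finset.mem_of_mem_erase (Finset.mem_of_mem_erase hx)))
              (fun x hx y hy hxy => horth x (Finset.mem_of_mem_erase (Finset.mem_of_mem_erase hx))
                y (Finset.mem_of_mem_erase (Finset.mem_of_mem_erase hy)) hxy)
              (fun x hx => hlam x (Finset.mem_of_mem_erase (Finset.mem_of_mem_erase hx)))
              (by linarith) ?_ ?_
            · refine Or.inr ⟨hnorm i hi, fun x hx => ?_⟩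
              have hxi : x ≠ i := Finset.ne_of_mem_erase (Finset.mem_of_mem_erase hx)
              exact horth i hi x (Finset.mem_of_mem_erase (Finset.mem_of_mem_erase hx))
                (Ne.symm hxi)
            · have hsplitr : ∑ x ∈ s, lam x
                  = lam i + (lam j + ∑ x ∈ (s.erase i).erase j, lam x) := by
                rw [Finset.add_sum_erase _ lam hjs', Finset.add_sum_erase _ lam hi]
              rw [hsplitr] at hsum
              push_cast [Nat.cast_sub hn2]
              linarith
    · -- single merge with the exceptional σ ∈ (0,1)
      have hσpos : 0 < σ := lt_of_le_of_ne hσ (Ne.symm hσ0)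
      obtain ⟨hwn, hwo⟩ := hw.resolve_left hσ0
      rcases Finset.eq_empty_or_nonempty s with hs | ⟨i, hi⟩
      · exfalso
        rw [hs, Finset.sum_empty, add_zero] at hsum
        have h1 : (n:ℝ) < 1 := by linarith
        have h2 : (0:ℝ) < n := by linarith
        have : n < 1 := by exact_mod_cast h1
        have : 0 < n := by exact_mod_cast h2
        omega
      · have hvwz : ⟪v i, w⟫_ℂ = 0 := inner_eq_zero_symm.mp (hwo i hi)
        obtain ⟨a, bb, c, ss, hab1, hcs1, hA, hB, hAB⟩ :=
          single_merge_coeffs (l₁ := lam i) (l₂ := σ) (hlam i hi) hσpos hσ1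
        have hmerge := merge_identity (v i) w a bb c ss (lam i + σ - 1) (lam i) σ hA hB hAB
        have hn1 : 1 ≤ n := by
          have herasenn : 0 ≤ ∑ x ∈ s.erase i, lam x :=
            Finset.sum_nonneg fun x hx => le_trans zero_le_one
              (hlam x (Finset.mem_of_mem_erase hx))
          have hsplitr : ∑ x ∈ s, lam x = lam i + ∑ x ∈ s.erase i, lam x :=
            (Finset.add_sum_erase s lam hi).symm
          have : (1:ℝ) ≤ n := by rw [← hsum, hsplitr]; linarith [hlam i hi]
          exact_mod_cast this
        have key : (σ:ℂ) • rk1 w + ∑ x ∈ s, (lam x : ℂ) • rk1 (v x) =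
            rk1 ((a:ℂ)•(v i) + (bb:ℂ)•w) +
            (((lam i + σ - 1 : ℝ):ℂ) • rk1 ((c:ℂ)•(v i) + (ss:ℂ)•w) +
              ∑ x ∈ s.erase i, (lam x : ℂ) • rk1 (v x)) := by
          rw [← Finset.add_sum_erase s _ hi, ← add_assoc,
            add_comm ((σ:ℂ) • rk1 w) ((lam i:ℂ) • rk1 (v i)), hmerge]
          abel
        rw [key]
        refine SOP.add (SOP.proj (isProjOp_rk1 (norm_combo (hnorm i hi) hwn hvwz hab1))) ?_
        refine IH (n-1) (by omega) (s.erase i) lam (lam i + σ - 1) ((c:ℂ)•(v i) + (ss:ℂ)•w)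
          (fun x hx => hnorm x (Finset.mem_of_mem_erase hx))
          (fun x hx y hy hxy => horth x (Finset.mem_of_mem_erase hx)
            y (Finset.mem_of_mem_erase hy) hxy)
          (fun x hx => hlam x (Finset.mem_of_mem_erase hx))
          (by linarith [hlam i hi]) ?_ ?_
        · refine Or.inr ⟨norm_combo (hnorm i hi) hwn hvwz hcs1, fun x hx => ?_⟩
          exact inner_combo_zero
            (horth i hi x (Finset.mem_of_mem_erase hx) (Ne.symm (Finset.ne_of_mem_erase hx)))
            (hwo x (Finset.mem_of_mem_erase hx)) c ss
        · have hsplitr : ∑ x ∈ s, lam x = lam i + ∑ x ∈ s.erase i, lam x :=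
            (Finset.add_sum_erase s lam hi).symm
          rw [hsplitr] at hsum
          push_cast [Nat.cast_sub hn1]
          linarith

lemma spectral (k : H →L[ℂ] H) (hk : k.IsPositive)
    (hfin : FiniteDimensional ℂ (LinearMap.range (k : H →ₗ[ℂ] H))) :
    ∃ (r : ℕ) (vv : Fin r → H) (μ : Fin r → ℝ),
      (∀ i, ‖vv i‖ = 1) ∧ (∀ i j, i ≠ j → ⟪vv i, vv j⟫_ℂ = 0) ∧ (∀ i, 0 < μ i) ∧
      k = ∑ i, (μ i : ℂ) • rk1 (vv i) ∧
      rangeProjection k = ∑ i, rk1 (vv i) := by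
  haveI := hfin
  set V := (LinearMap.range (k : H →ₗ[ℂ] H)).topologicalClosure with hVdef
  have hVeq : V = LinearMap.range (k : H →ₗ[ℂ] H) :=
    IsClosed.submodule_topologicalClosure_eq (Submodule.closed_of_finiteDimensional _)
  haveI : FiniteDimensional ℂ V := by rw [hVeq]; exact hfin
  have hsymH : (k : H →ₗ[ℂ] H).IsSymmetric :=
    hk.1
  have hinv : ∀ x ∈ V, (k : H →ₗ[ℂ] H) x ∈ V := fun x _ =>
    Submodule.le_topologicalClosure _ (LinearMap.mem_range_self (k : H →ₗ[ℂ] H) x)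
  set T := (k : H →ₗ[ℂ] H).restrict hinv with hTdef
  have hTsym : T.IsSymmetric := by
    intro x y
    have := hsymH (x : H) (y : H)
    simpa [hTdef, Submodule.coe_inner, LinearMap.restrict_coe_apply] using this
  set r := Module.finrank ℂ V with hrdef
  set B := hTsym.eigenvectorBasis rfl with hBdef
  set μ := hTsym.eigenvalues (rfl : Module.finrank ℂ V = r) with hμdef
  set vv : Fin r → H := fun i => (B i : H) with hvvdef
  have happ : ∀ i, k (vv i) = (μ i : ℂ) • (vv i) := by
    intro i
    have h := hTsym.apply_eigenvectorBasis (rfl : Module.finrank ℂ V = r) i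
    calc k (vv i) = ↑(T (B i)) := rfl
    _ = ↑((μ i : ℂ) • B i) := by rw [h]; rfl
    _ = (μ i : ℂ) • vv i := rfl
  have hnorm : ∀ i, ‖vv i‖ = 1 := fun i => by
    have := B.orthonormal.1 i
    exact this
  have horth : ∀ i j, i ≠ j → ⟪vv i, vv j⟫_ℂ = 0 := fun i j hij => by
    have := B.orthonormal.2 hij
    simpa [hvvdef, Submodule.coe_inner] using this
  have hμpos : ∀ i, 0 < μ i := by
    intro i
    have h0 : 0 ≤ μ i := by
      have := hk.2 (vv i)
      rw [ContinuousLinearMap.reApplyInnerSelf_apply, happ i] at this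
      have hx : ⟪(μ i : ℂ) • vv i, vv i⟫_ℂ = (μ i : ℂ) := by
        rw [inner_smul_left, Complex.conj_ofReal, @inner_self_eq_norm_sq_to_K ℂ, hnorm i]
        norm_num
      rw [hx] at this
      simpa using this
    rcases h0.lt_or_eq with h | h
    · exact h
    · exfalso
      have hz : k (vv i) = 0 := by rw [happ i, ← h]; simp
      have hmem : vv i ∈ LinearMap.range (k : H →ₗ[ℂ] H) := by
        rw [← hVeq]; exact (B i).2
      obtain ⟨y, hy⟩ := hmem
      have : ⟪vv i, vv i⟫_ℂ = 0 := by
        calc ⟪vv i, vv i⟫_ℂ = ⟪k y, vv i⟫_ℂ := congrArg (fun z => ⟪z, vv i⟫_ℂ) hy.symm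
        _ = ⟪y, k (vv i)⟫_ℂ := hsymH y (vv i)
        _ = 0 := by rw [hz, inner_zero_right]
      rw [inner_self_eq_zero] at this
      have hn := hnorm i
      rw [this] at hn
      simpa using hn
  have hproj : ∀ x : H, (↑(V.orthogonalProjectionOnto x) : H) = ∑ i, ⟪vv i, x⟫_ℂ • vv i := by
    intro x
    have := B.orthogonalProjectionOnto_apply_eq_sum x
    have h2 := congrArg (Subtype.val) this
    simpa [hvvdef] using h2
  refine ⟨r, vv, μ, hnorm, horth, hμpos, ?_, ?_⟩
  · ext x
    have hperp : k (x - ↑(V.orthogonalProjectionOnto x)) = 0 := by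
      set z := x - ↑(V.orthogonalProjectionOnto x) with hzdef
      have hz : z ∈ Vᗮ := V.sub_starProjection_mem_orthogonal x
      have : ⟪k z, k z⟫_ℂ = 0 := by
        calc ⟪k z, k z⟫_ℂ = ⟪z, k (k z)⟫_ℂ := hsymH z (k z)
        _ = 0 := by
            have hmem : k (k z) ∈ V :=
              Submodule.le_topologicalClosure _ (LinearMap.mem_range_self (k : H →ₗ[ℂ] H) (k z))
            exact (Submodule.mem_orthogonal' V z).mp hz _ hmem
      rwa [inner_self_eq_zero] at this
    have hx : k x = k ↑(V.orthogonalProjectionOnto x) := by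
      have : k x = k (↑(V.orthogonalProjectionOnto x) + (x - ↑(V.orthogonalProjectionOnto x))) := by
        congr 1; abel
      rw [this, map_add, hperp, add_zero]
    rw [hx, hproj x, map_sum]
    rw [ContinuousLinearMap.sum_apply]
    refine Finset.sum_congr rfl fun i _ => ?_
    rw [map_smul, happ i]
    simp only [ContinuousLinearMap.smul_apply, rk1_apply]
    exact smul_comm _ _ _
  · ext x
    have : rangeProjection k x = (↑(V.orthogonalProjectionOnto x) : H) := rfl
    rw [this, hproj x, ContinuousLinearMap.sum_apply]
    exact Finset.sum_congr rfl fun i _ => by rw [rk1_apply]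

lemma trace_eq {ι : Type*} (b : HilbertBasis ι ℂ H) (k : H →L[ℂ] H)
    {r : ℕ} (vv : Fin r → H) (μ : Fin r → ℝ) (hnorm : ∀ i, ‖vv i‖ = 1)
    (hk : k = ∑ i, (μ i : ℂ) • rk1 (vv i)) :
    traceAlong b k = ∑ i, μ i := by
  have hone : ∀ i : Fin r, ⟪vv i, vv i⟫_ℂ = 1 := fun i => by
    rw [@inner_self_eq_norm_sq_to_K ℂ, hnorm i]; norm_num
  have hi : ∀ i : Fin r, HasSum (fun j => μ i * (⟪vv i, b j⟫_ℂ * ⟪b j, vv i⟫_ℂ).re) (μ i) := by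
    intro i
    have h := (b.hasSum_inner_mul_inner (vv i) (vv i)).mapL Complex.reCLM
    rw [hone i] at h
    have h2 := h.mul_left (μ i)
    simpa using h2
  have htot := hasSum_sum (f := fun (i : Fin r) j => μ i * (⟪vv i, b j⟫_ℂ * ⟪b j, vv i⟫_ℂ).re)
      (s := Finset.univ) (fun i _ => hi i)
  have hpt : ∀ j, RCLike.re ⟪b j, k (b j)⟫_ℂ
      = ∑ i, μ i * (⟪vv i, b j⟫_ℂ * ⟪b j, vv i⟫_ℂ).re := by
    intro j
    rw [hk]
    simp only [ContinuousLinearMap.sum_apply, ContinuousLinearMap.smul_apply, rk1_apply,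
      inner_sum, inner_smul_right, RCLike.re_to_complex]
    rw [Complex.re_sum]
    refine Finset.sum_congr rfl fun i _ => ?_
    rw [Complex.re_ofReal_mul]
  unfold traceAlong
  rw [tsum_congr hpt]
  exact htot.tsum_eq

lemma isProjOp_sum_rk1 {r : ℕ} (vv : Fin r → H) (hnorm : ∀ i, ‖vv i‖ = 1)
    (horth : ∀ i j, i ≠ j → ⟪vv i, vv j⟫_ℂ = 0) : IsProjOp (∑ i, rk1 (vv i)) := by
  constructor
  · unfold IsSelfAdjoint
    rw [star_sum]
    exact Finset.sum_congr rfl fun i _ => rk1_symm (vv i)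
  · have hcomp : ∀ i j : Fin r, rk1 (vv i) * rk1 (vv j)
        = if j = i then rk1 (vv i) else 0 := by
      intro i j
      by_cases hij : j = i
      · subst hij
        simp only [if_pos rfl]
        ext y
        simp only [ContinuousLinearMap.mul_apply, rk1_apply, inner_smul_right, smul_smul]
        rw [@inner_self_eq_norm_sq_to_K ℂ, hnorm j]
        norm_num
        exact (rk1_apply _ _).symm
      · rw [if_neg hij]
        ext y
        simp only [ContinuousLinearMap.mul_apply, rk1_apply, inner_smul_right,
          ContinuousLinearMap.zero_apply]
        rw [horth i j (fun h => hij h.symm)]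
        simp
    rw [Finset.sum_mul_sum]
    rw [Finset.sum_congr rfl fun i _ => Finset.sum_congr rfl fun j _ => hcomp i j]
    simp

lemma isProjOp_one_sub {R : H →L[ℂ] H} (hR : IsProjOp R) : IsProjOp (1 - R) := by
  constructor
  · exact (IsSelfAdjoint.one (H →L[ℂ] H)).sub hR.1
  · have : (1 - R) * (1 - R) = 1 - R - R + R * R := by noncomm_ring
    rw [this, hR.2]
    abel

theorem stmt14' {ι : Type*} (b : HilbertBasis ι ℂ H)
    (k : H →L[ℂ] H) (hk : k.IsPositive)
    (hfin : FiniteDimensional ℂ (LinearMap.range (k : H →ₗ[ℂ] H)))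
    (m : ℕ) (hm : 0 < m) (htr : traceAlong b k = m) :
    (∃ (n : ℕ) (p : Fin n → H →L[ℂ] H), (∀ j, IsProjOp (p j)) ∧
        rangeProjection k + k = ∑ j, p j) ∧
    (∃ (n : ℕ) (p : Fin n → H →L[ℂ] H), (∀ j, IsProjOp (p j)) ∧ 1 + k = ∑ j, p j) := by
  obtain ⟨r, vv, μ, hnorm, horth, hμpos, hkeq, hReq⟩ := spectral k hk hfin
  have hμsum : ∑ i, μ i = m := by rw [← trace_eq b k vv μ hnorm hkeq]; exact htr
  have hA : rangeProjection k + k = ∑ i, ((1 + μ i : ℝ):ℂ) • rk1 (vv i) := by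
    rw [hReq, hkeq, ← Finset.sum_add_distrib]
    refine Finset.sum_congr rfl fun i _ => ?_
    push_cast
    rw [add_smul, one_smul]
  have hmain := fillmore_main vv (r + m) Finset.univ (fun i => 1 + μ i) 0 0
    (fun i _ => hnorm i)
    (fun i _ j _ hij => horth i j hij)
    (fun i _ => by simpa using (hμpos i).le)
    le_rfl (Or.inl rfl)
    (by
      rw [zero_add, Finset.sum_add_distrib]
      push_cast
      rw [hμsum]
      simp)
  rw [Complex.ofReal_zero, zero_smul, zero_add] at hmain
  have hSOP1 : SOP (rangeProjection k + k) := by rw [hA]; exact hmain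
  refine ⟨hSOP1, ?_⟩
  have hprojR : IsProjOp (rangeProjection k) := by
    rw [hReq]; exact isProjOp_sum_rk1 vv hnorm horth
  have h1k : 1 + k = (1 - rangeProjection k) + (rangeProjection k + k) := by abel
  rw [h1k]
  exact SOP.add (SOP.proj (isProjOp_one_sub hprojR)) hSOP1

/-- If `k` is positive of finite rank with positive integer trace, then `R_k + k` is a
finite sum of projections, and hence so is `I + k`. -/
theorem stmt14 {ι : Type*} (b : HilbertBasis ι ℂ H)
    (k : H →L[ℂ] H) (hk : k.IsPositive)
    (hfin : FiniteDimensional ℂ (LinearMap.range (k : H →ₗ[ℂ] H)))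
    (m : ℕ) (hm : 0 < m) (htr : traceAlong b k = m) :
    (∃ (n : ℕ) (p : Fin n → H →L[ℂ] H), (∀ j, IsProjOp (p j)) ∧
        rangeProjection k + k = ∑ j, p j) ∧
    (∃ (n : ℕ) (p : Fin n → H →L[ℂ] H), (∀ j, IsProjOp (p j)) ∧ 1 + k = ∑ j, p j) := by
  exact stmt14' b k hk hfin m hm htr
end
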